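/- Let μ ∈ ℝ, σ > 0 with μ² ≤ σ², and let f(x) = (1/√(2πσ²)) exp(−(x−μ)²/(2σ²)). Let p be an even probability density with mean zero such that ∫₀^∞ p(√γ x) dx > 0 for each γ > 0. Then for every γ > 0, ∫ f(x) √γ p(√γ x) dx < f(0). -/

import Mathlib

open MeasureTheory Set Real

lemma my_cosh_lt_exp_half_sq {x : ℝ} (hx : x ≠ 0) : Real.cosh x < Real.exp (x ^ 2 / 2) := by
  rw [Real.cosh_eq_tsum, Real.exp_eq_exp_ℝ, NormedSpace.exp_eq_tsum ℝ]
  refine Summable.tsum_lt_tsum_of_nonneg (i := 2) (fun b => by rw [pow_mul]; positivity) (fun i => ?_) ?_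
    (NormedSpace.expSeries_summable' (𝕂 := ℝ) (x ^ 2 / 2))
  · simp only [div_pow, pow_mul, smul_eq_mul, inv_mul_eq_div, div_div]
    gcongr
    norm_cast
    exact Nat.two_pow_mul_factorial_le_factorial_two_mul _
  · have h4 : (0:ℝ) < x ^ 4 := by positivity
    simp only [smul_eq_mul]
    norm_num [Nat.factorial]
    nlinarith [h4]

lemma my_key (μ σ : ℝ) (hσ : 0 < σ) (hμ : μ ^ 2 ≤ σ ^ 2) {x : ℝ} (hx : x ≠ 0) :
    Real.exp (-(x - μ) ^ 2 / (2 * σ ^ 2)) + Real.exp (-(-x - μ) ^ 2 / (2 * σ ^ 2))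
      < 2 * Real.exp (-(0 - μ) ^ 2 / (2 * σ ^ 2)) := by
  have hσ2 : (0:ℝ) < σ ^ 2 := by positivity
  have hσ' : σ ≠ 0 := ne_of_gt hσ
  set t : ℝ := x * μ / σ ^ 2 with ht
  set A : ℝ := Real.exp (-(x ^ 2 + μ ^ 2) / (2 * σ ^ 2)) with hA
  have hApos : 0 < A := Real.exp_pos _
  have e1 : Real.exp (-(x - μ) ^ 2 / (2 * σ ^ 2)) = A * Real.exp t := by
    rw [hA, ← Real.exp_add]; congr 1; rw [ht]; field_simp; ring
  have e2 : Real.exp (-(-x - μ) ^ 2 / (2 * σ ^ 2)) = A * Real.exp (-t) := by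
    rw [hA, ← Real.exp_add]; congr 1; rw [ht]; field_simp; ring
  have e3 : Real.exp (-(0 - μ) ^ 2 / (2 * σ ^ 2)) = A * Real.exp (x ^ 2 / (2 * σ ^ 2)) := by
    rw [hA, ← Real.exp_add]; congr 1; field_simp; ring
  have hx2 : (0:ℝ) < x ^ 2 := by positivity
  have hcosh : Real.cosh t < Real.exp (x ^ 2 / (2 * σ ^ 2)) := by
    rcases eq_or_lt_of_le hμ with heq | hlt
    · have hμ0 : μ ≠ 0 := by
        intro h; rw [h] at heq; nlinarith [hσ2]
      have ht0 : t ≠ 0 := by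
        rw [ht]; exact div_ne_zero (mul_ne_zero hx hμ0) (ne_of_gt hσ2)
      have hlt2 := my_cosh_lt_exp_half_sq ht0
      have harg : t ^ 2 / 2 = x ^ 2 / (2 * σ ^ 2) := by
        rw [ht]; field_simp; linear_combination heq
      rwa [harg] at hlt2
    · calc Real.cosh t ≤ Real.exp (t ^ 2 / 2) := Real.cosh_le_exp_half_sq t
        _ < Real.exp (x ^ 2 / (2 * σ ^ 2)) := by
            apply Real.exp_lt_exp.mpr
            rw [ht, div_pow, div_div, div_lt_div_iff₀ (by positivity) (by positivity)]
            have h5 := mul_lt_mul_of_pos_left hlt (mul_pos hx2 hσ2)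
            nlinarith [h5]
  have hsum : Real.exp t + Real.exp (-t) < 2 * Real.exp (x ^ 2 / (2 * σ ^ 2)) := by
    have hce := Real.cosh_eq t
    nlinarith [hcosh]
  rw [e1, e2, e3]
  nlinarith [hsum, hApos]

theorem stmt18 (μ σ : ℝ) (hσ : 0 < σ) (hμ : μ ^ 2 ≤ σ ^ 2) (p : ℝ → ℝ)
    (hnn : ∀ x, 0 ≤ p x) (hint : Integrable p)
    (hprob : ∫ x, p x = 1)
    (heven : ∀ x, p (-x) = p x)
    (hmean : ∫ x, x * p x = 0)
    (hpos : ∀ γ : ℝ, 0 < γ → 0 < ∫ x in Ioi (0:ℝ), p (Real.sqrt γ * x)) :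
    ∀ γ : ℝ, 0 < γ →
      (∫ x, ((1 / Real.sqrt (2 * π * σ ^ 2)) * Real.exp (-(x - μ) ^ 2 / (2 * σ ^ 2)))
          * (Real.sqrt γ * p (Real.sqrt γ * x)))
      < (1 / Real.sqrt (2 * π * σ ^ 2)) * Real.exp (-(0 - μ) ^ 2 / (2 * σ ^ 2)) := by
  intro γ hγ
  have hs : 0 < Real.sqrt γ := Real.sqrt_pos.mpr hγ
  set s : ℝ := Real.sqrt γ with hs_def
  set c : ℝ := 1 / Real.sqrt (2 * π * σ ^ 2) with hc_def
  have hc : 0 < c := by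
    have h2 : 0 < Real.sqrt (2 * π * σ ^ 2) :=
      Real.sqrt_pos.mpr (by positivity)
    positivity
  set f : ℝ → ℝ := fun x => c * Real.exp (-(x - μ) ^ 2 / (2 * σ ^ 2)) with hf_def
  set q : ℝ → ℝ := fun x => s * p (s * x) with hq_def
  show (∫ x, f x * q x) < f 0
  -- basic properties
  have hq_nonneg : ∀ x, 0 ≤ q x := fun x => mul_nonneg hs.le (hnn _)
  have hq_even : ∀ x, q (-x) = q x := by
    intro x; simp only [hq_def, mul_neg, heven]
  have hqint : Integrable q := (hint.comp_mul_left' hs.ne').const_mul s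
  have hq_one : ∫ x, q x = 1 := by
    show ∫ x, s * p (s * x) = 1
    rw [MeasureTheory.integral_const_mul, MeasureTheory.Measure.integral_comp_mul_left p s,
      hprob, smul_eq_mul, abs_inv, abs_of_pos hs]
    field_simp
  have hfb : ∀ x, ‖f x‖ ≤ c := by
    intro x
    have hle : -(x - μ) ^ 2 / (2 * σ ^ 2) ≤ 0 :=
      div_nonpos_of_nonpos_of_nonneg (neg_nonpos.mpr (sq_nonneg _)) (by positivity)
    have he1 := Real.exp_le_one_iff.mpr hle
    have he0 := Real.exp_pos (-(x - μ) ^ 2 / (2 * σ ^ 2))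
    show ‖c * Real.exp (-(x - μ) ^ 2 / (2 * σ ^ 2))‖ ≤ c
    rw [Real.norm_eq_abs, abs_of_nonneg (by positivity)]
    nlinarith [hc, he1, he0]
  have hfnb : ∀ x, ‖f (-x)‖ ≤ c := fun x => hfb (-x)
  have hfc : Continuous f := by
    apply continuous_const.mul
    exact Real.continuous_exp.comp (by continuity)
  have hfq : Integrable (fun x => f x * q x) :=
    hqint.bdd_mul hfc.aestronglyMeasurable (ae_of_all _ hfb)
  have hfnq : Integrable (fun x => f (-x) * q x) :=
    hqint.bdd_mul (hfc.comp continuous_neg).aestronglyMeasurable (ae_of_all _ hfnb)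
  -- symmetry
  have hsym : ∫ x, f (-x) * q x = ∫ x, f x * q x := by
    have h2 := MeasureTheory.Measure.integral_comp_mul_left (fun y => f y * q y) (-1)
    simp only [neg_one_mul, hq_even, abs_inv, abs_neg, abs_one, inv_one, one_smul] at h2
    exact h2
  -- pointwise strict bound
  have key : ∀ x : ℝ, x ≠ 0 → f x + f (-x) < 2 * f 0 := by
    intro x hx
    have hk := my_key μ σ hσ hμ hx
    show c * Real.exp (-(x - μ) ^ 2 / (2 * σ ^ 2)) + c * Real.exp (-(-x - μ) ^ 2 / (2 * σ ^ 2))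
      < 2 * (c * Real.exp (-(0 - μ) ^ 2 / (2 * σ ^ 2)))
    nlinarith [hk, hc]
  have key_le : ∀ x : ℝ, f x + f (-x) ≤ 2 * f 0 := by
    intro x
    rcases eq_or_ne x 0 with rfl | hx
    · simp only [neg_zero]; linarith
    · exact (key x hx).le
  -- the nonnegative gap function
  set H : ℝ → ℝ := fun x => (2 * f 0 - (f x + f (-x))) * q x with hH_def
  have hH_nonneg : ∀ x, 0 ≤ H x := fun x =>
    mul_nonneg (by linarith [key_le x]) (hq_nonneg x)
  have hint1 : Integrable (fun x => 2 * f 0 * q x - f x * q x) :=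
    (hqint.const_mul (2 * f 0)).sub hfq
  have hint0 : Integrable (fun x => 2 * f 0 * q x) := hqint.const_mul (2 * f 0)
  have hH_eq : H = fun x => 2 * f 0 * q x - f x * q x - f (-x) * q x := by
    funext x; simp only [hH_def]; ring
  have hHint : Integrable H := by
    rw [hH_eq]; exact hint1.sub hfnq
  -- positivity of the integral of H
  have hps := hpos γ hγ
  have hri : IntegrableOn (fun x => p (s * x)) (Ioi 0) :=
    (hint.comp_mul_left' hs.ne').integrableOn
  rw [setIntegral_pos_iff_support_of_nonneg_ae
      (ae_of_all _ fun x => hnn _) hri] at hps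
  have hsub : Function.support (fun x => p (s * x)) ∩ Ioi 0 ⊆ Function.support H := by
    rintro x ⟨hx1, hx2⟩
    have hxpos : (0:ℝ) < x := hx2
    have hp1 : 0 < p (s * x) := lt_of_le_of_ne (hnn _) (Ne.symm hx1)
    have hq1 : 0 < q x := mul_pos hs hp1
    have h2 : 0 < 2 * f 0 - (f x + f (-x)) := by linarith [key x (ne_of_gt hxpos)]
    exact ne_of_gt (mul_pos h2 hq1)
  have hHpos : 0 < ∫ x, H x := by
    rw [integral_pos_iff_support_of_nonneg_ae (ae_of_all _ hH_nonneg) hHint]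
    exact lt_of_lt_of_le hps (measure_mono hsub)
  -- assemble
  have hval : ∫ x, H x = 2 * f 0 - 2 * ∫ x, f x * q x := by
    rw [hH_eq, MeasureTheory.integral_sub hint1 hfnq,
      MeasureTheory.integral_sub hint0 hfq,
      MeasureTheory.integral_const_mul, hq_one, hsym]
    ring
  have hfin : 0 < 2 * f 0 - 2 * ∫ x, f x * q x := hval ▸ hHpos
  linarith
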